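/- Let W be a matrix weight of size N and let T ∈ Mat_N(ℂ) satisfy T W(x) = W(x) T* for almost every x in the support of W. Then every eigenvalue of T is real and T is diagonalizable (its nilpotent part in the Jordan decomposition is zero). -/

import Mathlib

open MeasureTheory Matrix
open scoped ComplexOrder

noncomputable section

/-- The set of real points strictly between the extended-real endpoints `a` and `b`. -/
def weightSupport (a b : EReal) : Set ℝ := {x : ℝ | a < (x : EReal) ∧ (x : EReal) < b}

variable {I : Type} [Fintype I] [DecidableEq I]
variable {I' : Type} [Fintype I'] [DecidableEq I']

/-- Entrywise integral of a matrix-valued function over a set. -/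
def matIntegral (S : Set ℝ) (F : ℝ → Matrix I I ℂ) : Matrix I I ℂ :=
  Matrix.of fun i j => ∫ x in S, F x i j

/-- `W` is a matrix weight on the (nondegenerate) interval `(a,b)`. -/
def IsMatrixWeight (a b : EReal) (W : ℝ → Matrix I I ℂ) : Prop :=
  a < b ∧
  (∀ x ∈ weightSupport a b, (W x).PosSemidef) ∧
  (∀ᵐ x : ℝ ∂(volume.restrict (weightSupport a b)), (W x).PosDef) ∧
  (∀ n : ℕ, ∀ i j, IntegrableOn (fun x : ℝ => (x : ℂ) ^ n * W x i j) (weightSupport a b))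

/-- Equivalence of matrix weights: `W' = M W M*` for a nonsingular `M`. -/
def WeightEquiv (a b : EReal) (W : ℝ → Matrix I I ℂ) (W' : ℝ → Matrix I' I' ℂ) : Prop :=
  ∃ (M : Matrix I' I ℂ) (M' : Matrix I I' ℂ), M * M' = 1 ∧ M' * M = 1 ∧
    ∀ x ∈ weightSupport a b, W' x = M * W x * Mᴴ

/-- Unitary equivalence of matrix weights. -/
def UnitaryWeightEquiv (a b : EReal) (W : ℝ → Matrix I I ℂ) (W' : ℝ → Matrix I' I' ℂ) : Prop :=
  ∃ M : Matrix I' I ℂ, M * Mᴴ = 1 ∧ Mᴴ * M = 1 ∧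
    ∀ x ∈ weightSupport a b, W' x = M * W x * Mᴴ

/-- `W` reduces: it is equivalent to a direct sum of two matrix weights of smaller size. -/
def Reduces (a b : EReal) (W : ℝ → Matrix I I ℂ) : Prop :=
  ∃ (N₁ N₂ : ℕ) (W₁ : ℝ → Matrix (Fin N₁) (Fin N₁) ℂ) (W₂ : ℝ → Matrix (Fin N₂) (Fin N₂) ℂ),
    0 < N₁ ∧ 0 < N₂ ∧ N₁ + N₂ = Fintype.card I ∧
    IsMatrixWeight a b W₁ ∧ IsMatrixWeight a b W₂ ∧
    WeightEquiv a b W (fun x => Matrix.fromBlocks (W₁ x) 0 0 (W₂ x))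

/-- The real vector space `C_ℝ` of a matrix weight. -/
def CR (a b : EReal) (W : ℝ → Matrix I I ℂ) : Set (Matrix I I ℂ) :=
  {T | ∀ᵐ x ∂(volume.restrict (weightSupport a b)), T * W x = W x * Tᴴ}

/-- Evaluation of a matrix polynomial at a real point. -/
def polyEval (p : Polynomial (Matrix I I ℂ)) (x : ℝ) : Matrix I I ℂ :=
  p.eval ((x : ℂ) • (1 : Matrix I I ℂ))

/-- A sequence of orthogonal polynomials with respect to `W`:  `Q n` has degree `n` with
nonsingular leading coefficient, and distinct members are orthogonal. -/
def IsOPS (a b : EReal) (W : ℝ → Matrix I I ℂ) (Q : ℕ → Polynomial (Matrix I I ℂ)) : Prop :=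
  (∀ n, (Q n).natDegree = n ∧ IsUnit ((Q n).coeff n)) ∧
  ∀ n m, n ≠ m →
    matIntegral (weightSupport a b) (fun x => polyEval (Q n) x * W x * (polyEval (Q m) x)ᴴ) = 0

/-- The sequence of monic orthogonal polynomials with respect to `W`. -/
def IsMonicOPS (a b : EReal) (W : ℝ → Matrix I I ℂ) (P : ℕ → Polynomial (Matrix I I ℂ)) : Prop :=
  (∀ n, (P n).Monic ∧ (P n).natDegree = n) ∧
  ∀ n m, n ≠ m →
    matIntegral (weightSupport a b) (fun x => polyEval (P n) x * W x * (polyEval (P m) x)ᴴ) = 0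

end

open scoped MatrixOrder

theorem aux4 {N : ℕ} (A T : Matrix (Fin N) (Fin N) ℂ) (hA : A.PosDef)
    (h : T * A = A * Tᴴ) :
    (∀ μ ∈ spectrum ℂ T, ∃ r : ℝ, μ = (r : ℂ)) ∧
    ∃ (M M' D : Matrix (Fin N) (Fin N) ℂ),
      M * M' = 1 ∧ M' * M = 1 ∧ D.IsDiag ∧ T = M * D * M' := by
  set B := CFC.sqrt A with hBdef
  have hBps : B.PosSemidef := (CFC.sqrt_nonneg A).posSemidef
  have hBher : B.IsHermitian := hBps.1
  have hBB : B * B = A := CFC.sqrt_mul_sqrt_self A hA.posSemidef.nonneg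
  have hdet : IsUnit B.det := by
    have hdA : IsUnit A.det := (Matrix.isUnit_iff_isUnit_det A).1 hA.isUnit
    rw [← hBB, Matrix.det_mul] at hdA
    exact isUnit_of_mul_isUnit_left hdA
  have hBinv : B * B⁻¹ = 1 := Matrix.mul_nonsing_inv B hdet
  have hinvB : B⁻¹ * B = 1 := Matrix.nonsing_inv_mul B hdet
  have hBinvher : (B⁻¹).IsHermitian := hBher.inv
  set S := B⁻¹ * T * B with hSdef
  have hTS : T = B * S * B⁻¹ := by
    rw [hSdef]
    calc T = (B * B⁻¹) * T * (B * B⁻¹) := by rw [hBinv]; simp [Matrix.mul_assoc]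
    _ = B * (B⁻¹ * T * B) * B⁻¹ := by simp only [Matrix.mul_assoc]
  have hSher : S.IsHermitian := by
    have key : B * Sᴴ * B = B * S * B := by
      have hSH : Sᴴ = B * Tᴴ * B⁻¹ := by
        rw [hSdef]
        simp only [Matrix.conjTranspose_mul, hBher.eq, hBinvher.eq, Matrix.mul_assoc]
      rw [hSH, hSdef]
      calc B * (B * Tᴴ * B⁻¹) * B = (B * B) * Tᴴ * (B⁻¹ * B) := by
            simp only [Matrix.mul_assoc]
        _ = A * Tᴴ := by rw [hBB, hinvB, Matrix.mul_one]
        _ = T * A := h.symm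
        _ = (B * B⁻¹) * T * (B * B) := by rw [hBinv, hBB]; simp [Matrix.mul_assoc]
        _ = B * (B⁻¹ * T * B) * B := by simp only [Matrix.mul_assoc]
    show Sᴴ = S
    have e : ∀ X : Matrix (Fin N) (Fin N) ℂ, B⁻¹ * (B * X * B) * B⁻¹ = X := by
      intro X
      calc B⁻¹ * (B * X * B) * B⁻¹ = (B⁻¹ * B) * X * (B * B⁻¹) := by
            simp only [Matrix.mul_assoc]
        _ = X := by rw [hinvB, hBinv, Matrix.one_mul, Matrix.mul_one]
    calc Sᴴ = B⁻¹ * (B * Sᴴ * B) * B⁻¹ := (e _).symm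
      _ = B⁻¹ * (B * S * B) * B⁻¹ := by rw [key]
      _ = S := e _
  set D : Matrix (Fin N) (Fin N) ℂ :=
    Matrix.diagonal (RCLike.ofReal ∘ hSher.eigenvalues) with hDdef
  have hspec := hSher.spectral_theorem
  set U : Matrix (Fin N) (Fin N) ℂ := (hSher.eigenvectorUnitary : Matrix (Fin N) (Fin N) ℂ)
    with hUdef
  have hUU : U * star U = 1 := (Matrix.mem_unitaryGroup_iff).mp hSher.eigenvectorUnitary.2
  have hUU' : star U * U = 1 := (Matrix.mem_unitaryGroup_iff').mp hSher.eigenvectorUnitary.2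
  have hT2 : T = (B * U) * D * (star U * B⁻¹) := by
    rw [hTS, hspec, Unitary.conjStarAlgAut_apply]
    simp only [Matrix.mul_assoc, Unitary.coe_star]
    rfl
  refine ⟨?_, B * U, star U * B⁻¹, D, ?_, ?_, Matrix.isDiag_diagonal _, hT2⟩
  · intro μ hμ
    set u : (Matrix (Fin N) (Fin N) ℂ)ˣ :=
      ⟨B * U, star U * B⁻¹, by rw [Matrix.mul_assoc, ← Matrix.mul_assoc U, hUU, Matrix.one_mul, hBinv],
        by rw [Matrix.mul_assoc, ← Matrix.mul_assoc B⁻¹, hinvB, Matrix.one_mul, hUU']⟩ with hu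
    have hTu : ((u : Matrix (Fin N) (Fin N) ℂ) * D * ((u⁻¹ : (Matrix (Fin N) (Fin N) ℂ)ˣ) : Matrix (Fin N) (Fin N) ℂ)) = T := hT2.symm
    rw [← hTu, spectrum.units_conjugate, spectrum_diagonal] at hμ
    obtain ⟨i, hi⟩ := hμ
    exact ⟨hSher.eigenvalues i, hi.symm⟩
  · rw [Matrix.mul_assoc, ← Matrix.mul_assoc U, hUU, Matrix.one_mul, hBinv]
  · rw [Matrix.mul_assoc, ← Matrix.mul_assoc B⁻¹, hinvB, Matrix.one_mul, hUU']

/-- If `W` is a matrix weight and `T W(x) = W(x) T*` for almost every `x`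
in the support of `W`, then all eigenvalues of `T` are real and `T` is diagonalizable. -/
theorem stmt_4 {N : ℕ} (a b : EReal) (W : ℝ → Matrix (Fin N) (Fin N) ℂ)
    (hW : IsMatrixWeight a b W)
    (T : Matrix (Fin N) (Fin N) ℂ)
    (hT : ∀ᵐ x : ℝ ∂(volume.restrict (weightSupport a b)), T * W x = W x * Tᴴ) :
    (∀ μ ∈ spectrum ℂ T, ∃ r : ℝ, μ = (r : ℂ)) ∧
    ∃ (M M' D : Matrix (Fin N) (Fin N) ℂ),
      M * M' = 1 ∧ M' * M = 1 ∧ D.IsDiag ∧ T = M * D * M' := by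

  obtain ⟨hab, -, hPD, -⟩ := hW
  have hopen : IsOpen (weightSupport a b) := by
    have heq : weightSupport a b = ((↑) : ℝ → EReal) ⁻¹' (Set.Ioo a b) := rfl
    rw [heq]
    exact isOpen_Ioo.preimage continuous_coe_real_ereal
  have hne : (weightSupport a b).Nonempty := by
    obtain ⟨y, hy1, hy2⟩ := EReal.exists_between_coe_real hab
    exact ⟨y, hy1, hy2⟩
  have hpos : 0 < volume (weightSupport a b) := hopen.measure_pos volume hne
  have hμne : volume.restrict (weightSupport a b) ≠ 0 := by
    intro hcon
    have h2 := Measure.restrict_apply_univ (μ := volume) (s := weightSupport a b)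
    rw [hcon] at h2
    simp only [Measure.coe_zero, Pi.zero_apply] at h2
    exact hpos.ne' h2.symm
  have : Filter.NeBot (ae (volume.restrict (weightSupport a b))) :=
    MeasureTheory.ae_neBot.2 hμne
  obtain ⟨x, hx1, hx2⟩ := (hPD.and hT).exists
  exact aux4 (W x) T hx1 hx2
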